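/- Let u : ℝ → ℝ be twice differentiable and positive, and let φ : ℝ → ℝ be twice differentiable satisfying λ·φ(x) = d(x)·φ''(x) - a(x)·φ'(x) + b(x)·φ(x) for all x, where u satisfies 0 = d(x)·u''(x) - a(x)·u'(x) + u(x)·(b(x) - c(x)·u(x)) for all x. Then ψ(x) := φ(x)/u(x) satisfies λ·ψ(x) = d(x)·ψ''(x) - a*(x)·ψ'(x) + c(x)·u(x)·ψ(x) for all x, where a*(x) := a(x) - 2·d(x)·u'(x)/u(x). -/

import Mathlib

theorem stmt_3 (d a b c : ℝ → ℝ) (u u' u'' φ φ' φ'' : ℝ → ℝ) (lam : ℝ)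
    (hu_pos : ∀ x, 0 < u x)
    (hu' : ∀ x, HasDerivAt u (u' x) x) (hu'' : ∀ x, HasDerivAt u' (u'' x) x)
    (hφ' : ∀ x, HasDerivAt φ (φ' x) x) (hφ'' : ∀ x, HasDerivAt φ' (φ'' x) x)
    (heig : ∀ x, lam * φ x = d x * φ'' x - a x * φ' x + b x * φ x)
    (hss : ∀ x, 0 = d x * u'' x - a x * u' x + u x * (b x - c x * u x)) :
    ∀ x, lam * (φ x / u x) =
      d x * deriv (deriv (fun y => φ y / u y)) x
        - (a x - 2 * d x * u' x / u x) * deriv (fun y => φ y / u y) x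
        + c x * u x * (φ x / u x) := by
  have hune : ∀ x, u x ≠ 0 := fun x => (hu_pos x).ne'
  set q : ℝ → ℝ := fun y => (φ' y * u y - φ y * u' y) / (u y) ^ 2 with hq
  have hdiv : ∀ x, HasDerivAt (fun y => φ y / u y) (q x) x := by
    intro x
    exact ((hφ' x).div (hu' x) (hune x)).congr_deriv (by simp [hq, sq])
  have hd1 : deriv (fun y => φ y / u y) = q := by
    funext x; exact (hdiv x).deriv
  have hq' : ∀ x, HasDerivAt q
      (((φ'' x * u x - φ x * u'' x) * (u x) ^ 2
        - (φ' x * u x - φ x * u' x) * (2 * u x * u' x)) / ((u x) ^ 2) ^ 2) x := by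
    intro x
    have hnum : HasDerivAt (fun y => φ' y * u y - φ y * u' y)
        (φ'' x * u x - φ x * u'' x) x := by
      have := ((hφ'' x).mul (hu' x)).sub ((hφ' x).mul (hu'' x))
      exact this.congr_deriv (by ring)
    have hden : HasDerivAt (fun y => (u y) ^ 2) (2 * u x * u' x) x := by
      have := (hu' x).pow 2
      exact this.congr_deriv (by norm_num)
    exact hnum.div hden (pow_ne_zero 2 (hune x))
  intro x
  rw [hd1]
  rw [(hq' x).deriv]
  have h1 := heig x
  have h2 := hss x
  have hsub : a x - 2 * d x * u' x / u x = (a x * u x - 2 * d x * u' x) / u x := by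
    field_simp [hune x]
  rw [hsub]
  simp only [hq]
  field_simp [hune x]
  linear_combination (u x)^2 * h1 - φ x * u x * h2
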